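/- arXiv:1812.05019 — 2 statements merged into one kernel-verified Lean document; each statement's English description precedes it below -/
import Mathlib

section
/- Let t > 0. For every R ≥ 2t, ∫_0^t ∫_ℝ φ_{t−s,R}(y)² dy ds = (2/3)·R·t³ − t⁴/6. -/
open MeasureTheory Real intervalIntegral

/-- `φ_{a,R}(y) = (1/2) ∫_{-R}^R 1_{|x-y|≤a} dx`. -/
noncomputable def phi (a R y : ℝ) : ℝ :=
  (1/2) * ∫ x in (-R)..R, if |x - y| ≤ a then (1:ℝ) else 0

lemma phi_eq (a R y : ℝ) (ha : 0 ≤ a) (hR : 0 ≤ R) :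
    phi a R y = (1/2) * max 0 (min (y + a) R - max (y - a) (-R)) := by
  unfold phi
  congr 1
  have hRR : (-R) ≤ R := by linarith
  rw [intervalIntegral.integral_of_le hRR]
  have hind : ∀ x : ℝ, (if |x - y| ≤ a then (1:ℝ) else 0)
      = Set.indicator (Set.Icc (y - a) (y + a)) (fun _ => (1:ℝ)) x := by
    intro x
    rw [Set.indicator_apply]
    have : |x - y| ≤ a ↔ x ∈ Set.Icc (y - a) (y + a) := by
      rw [abs_sub_le_iff, Set.mem_Icc]
      constructor <;> rintro ⟨h1, h2⟩ <;> constructor <;> linarith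
    simp [this]
  simp_rw [hind]
  rw [MeasureTheory.setIntegral_indicator measurableSet_Icc]
  rw [MeasureTheory.setIntegral_const]
  set L := max (y - a) (-R) with hL
  set U := min (y + a) R with hU
  have hsub1 : Set.Ioo L U ⊆ Set.Icc (y - a) (y + a) ∩ Set.Ioc (-R) R := by
    rintro x ⟨hx1, hx2⟩
    refine ⟨⟨?_, ?_⟩, ?_, ?_⟩
    · exact le_of_lt (lt_of_le_of_lt (le_max_left _ _) hx1)
    · exact le_of_lt (lt_of_lt_of_le hx2 (min_le_left _ _))
    · exact lt_of_le_of_lt (le_max_right _ _) hx1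
    · exact le_of_lt (lt_of_lt_of_le hx2 (min_le_right _ _))
  have hsub2 : Set.Icc (y - a) (y + a) ∩ Set.Ioc (-R) R ⊆ Set.Icc L U := by
    rintro x ⟨⟨hx1, hx2⟩, hx3, hx4⟩
    exact ⟨max_le hx1 (le_of_lt hx3), le_min hx2 hx4⟩
  have hvol : volume (Set.Icc (y - a) (y + a) ∩ Set.Ioc (-R) R) = ENNReal.ofReal (U - L) := by
    refine le_antisymm ?_ ?_
    · calc volume (Set.Icc (y - a) (y + a) ∩ Set.Ioc (-R) R)
          ≤ volume (Set.Icc L U) := measure_mono hsub2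
        _ = ENNReal.ofReal (U - L) := Real.volume_Icc
    · calc ENNReal.ofReal (U - L) = volume (Set.Ioo L U) := Real.volume_Ioo.symm
        _ ≤ _ := measure_mono hsub1
  rw [Set.inter_comm, measureReal_def, hvol, smul_eq_mul, mul_one, ENNReal.toReal_ofReal', max_comm]

lemma int_sq_shift (c d k : ℝ) :
    (∫ y in c..d, (y + k) ^ 2) = ((d + k) ^ 3 - (c + k) ^ 3) / 3 := by
  rw [intervalIntegral.integral_comp_add_right (fun y => y ^ 2) k, integral_pow]
  norm_num

lemma inner_int (a R : ℝ) (ha : 0 ≤ a) (haR : 2 * a ≤ R) :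
    (∫ y : ℝ, (phi a R y) ^ 2) = 2 * R * a ^ 2 - (2/3) * a ^ 3 := by
  have hR : 0 ≤ R := by linarith
  have hphi : ∀ y, phi a R y = (1/2) * max 0 (min (y + a) R - max (y - a) (-R)) :=
    fun y => phi_eq a R y ha hR
  have hcont : Continuous fun y : ℝ =>
      ((1/2) * max 0 (min (y + a) R - max (y - a) (-R))) ^ 2 := by fun_prop
  -- support is contained in Icc (-(R+a)) (R+a)
  have hsupp : ∀ y : ℝ, y ∉ Set.Icc (-(R + a)) (R + a) → (phi a R y) ^ 2 = 0 := by
    intro y hy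
    rw [Set.mem_Icc, not_and_or] at hy
    rw [hphi]
    rcases hy with hy | hy
    · push_neg at hy
      have h1 : min (y + a) R ≤ y + a := min_le_left _ _
      have h2 : -R ≤ max (y - a) (-R) := le_max_right _ _
      have : min (y + a) R - max (y - a) (-R) ≤ 0 := by linarith
      rw [max_eq_left this]; ring
    · push_neg at hy
      have h1 : min (y + a) R ≤ R := min_le_right _ _
      have h2 : y - a ≤ max (y - a) (-R) := le_max_left _ _
      have : min (y + a) R - max (y - a) (-R) ≤ 0 := by linarith
      rw [max_eq_left this]; ring
  rw [← MeasureTheory.setIntegral_eq_integral_of_forall_compl_eq_zero hsupp]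
  rw [MeasureTheory.integral_Icc_eq_integral_Ioc,
    ← intervalIntegral.integral_of_le (by linarith : -(R + a) ≤ R + a)]
  simp_rw [hphi]
  have hle1 : -(R + a) ≤ -(R - a) := by linarith
  have hle2 : -(R - a) ≤ R - a := by linarith
  have hle3 : R - a ≤ R + a := by linarith
  have hI : ∀ c d : ℝ, IntervalIntegrable
      (fun y : ℝ => ((1/2) * max 0 (min (y + a) R - max (y - a) (-R))) ^ 2) volume c d :=
    fun c d => hcont.intervalIntegrable c d
  rw [← intervalIntegral.integral_add_adjacent_intervals (hI (-(R + a)) (-(R - a)))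
    ((hI (-(R - a)) (R - a)).trans (hI (R - a) (R + a))),
    ← intervalIntegral.integral_add_adjacent_intervals (hI (-(R - a)) (R - a)) (hI (R - a) (R + a))]
  have hleft : (∫ y in (-(R + a))..(-(R - a)),
      ((1/2) * max 0 (min (y + a) R - max (y - a) (-R))) ^ 2)
      = ∫ y in (-(R + a))..(-(R - a)), (1/4) * (y + (a + R)) ^ 2 := by
    apply intervalIntegral.integral_congr
    intro y hy
    rw [Set.uIcc_of_le hle1, Set.mem_Icc] at hy
    have h1 : min (y + a) R = y + a := min_eq_left (by linarith [hy.2])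
    have h2 : max (y - a) (-R) = -R := max_eq_right (by linarith [hy.2])
    have h3 : max 0 (y + a - (-R)) = y + a + R := by
      rw [max_eq_right (by linarith [hy.1])]; ring
    dsimp only; rw [h1, h2, h3]; ring
  have hmid : (∫ y in (-(R - a))..(R - a),
      ((1/2) * max 0 (min (y + a) R - max (y - a) (-R))) ^ 2)
      = ∫ y in (-(R - a))..(R - a), a ^ 2 := by
    apply intervalIntegral.integral_congr
    intro y hy
    rw [Set.uIcc_of_le hle2, Set.mem_Icc] at hy
    have h1 : min (y + a) R = y + a := min_eq_left (by linarith [hy.2])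
    have h2 : max (y - a) (-R) = y - a := max_eq_left (by linarith [hy.1])
    have h3 : max 0 (y + a - (y - a)) = 2 * a := by
      rw [show y + a - (y - a) = 2 * a by ring, max_eq_right (by linarith)]
    dsimp only; rw [h1, h2, h3]; ring
  have hright : (∫ y in (R - a)..(R + a),
      ((1/2) * max 0 (min (y + a) R - max (y - a) (-R))) ^ 2)
      = ∫ y in (R - a)..(R + a), (1/4) * (y + (-(R + a))) ^ 2 := by
    apply intervalIntegral.integral_congr
    intro y hy
    rw [Set.uIcc_of_le hle3, Set.mem_Icc] at hy
    have h1 : min (y + a) R = R := min_eq_right (by linarith [hy.1])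
    have h2 : max (y - a) (-R) = y - a := max_eq_left (by linarith [hy.1])
    have h3 : max 0 (R - (y - a)) = R + a - y := by
      rw [max_eq_right (by linarith [hy.2])]; ring
    dsimp only; rw [h1, h2, h3]; ring
  rw [hleft, hmid, hright, intervalIntegral.integral_const_mul, int_sq_shift,
    intervalIntegral.integral_const, intervalIntegral.integral_const_mul, int_sq_shift]
  simp only [smul_eq_mul]
  ring

/-- For `t > 0` and `R ≥ 2t`:
`∫_0^t ∫_ℝ φ_{t-s,R}(y)² dy ds = (2/3) R t³ - t⁴/6`. -/
theorem stmt_7 (t R : ℝ) (ht : 0 < t) (hR : 2 * t ≤ R) :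
    (∫ s in (0:ℝ)..t, ∫ y : ℝ, (phi (t - s) R y) ^ 2)
      = (2/3) * R * t ^ 3 - t ^ 4 / 6 := by
  have h1 : (∫ s in (0:ℝ)..t, ∫ y : ℝ, (phi (t - s) R y) ^ 2)
      = ∫ s in (0:ℝ)..t, (2 * R * (t - s) ^ 2 - (2/3) * (t - s) ^ 3) := by
    apply intervalIntegral.integral_congr
    intro s hs
    rw [Set.uIcc_of_le ht.le, Set.mem_Icc] at hs
    exact inner_int (t - s) R (by linarith [hs.2]) (by linarith [hs.1])
  rw [h1, intervalIntegral.integral_comp_sub_left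
    (fun u => 2 * R * u ^ 2 - (2/3) * u ^ 3) t]
  rw [sub_self, sub_zero]
  rw [intervalIntegral.integral_sub, intervalIntegral.integral_const_mul,
    intervalIntegral.integral_const_mul, integral_pow, integral_pow]
  · norm_num; ring
  · exact (by fun_prop : Continuous fun u : ℝ => 2 * R * u ^ 2).intervalIntegrable 0 t
  · exact (by fun_prop : Continuous fun u : ℝ => (2/3) * u ^ 3).intervalIntegrable 0 t
end

section
/- Let H ∈ (1/2, 1) and let t > 0. Then lim_{R→∞} R^{−2H}·∫_0^t H·(2H−1)·∫_{ℝ²} φ_{t−s,R}(y)·φ_{t−s,R}(z)·|y−z|^{2H−2} dy dz ds = (4^H·t³)/3. -/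
open MeasureTheory Real intervalIntegral Filter Topology

open Set

noncomputable def sp (q x : ℝ) : ℝ := if 0 ≤ x then x ^ q else -((-x) ^ q)

lemma sp_of_nonneg {x : ℝ} (q : ℝ) (h : 0 ≤ x) : sp q x = x ^ q := if_pos h

lemma sp_of_neg {x : ℝ} (q : ℝ) (h : x < 0) : sp q x = -((-x) ^ q) := if_neg (not_le.mpr h)

lemma sp_zero {q : ℝ} (hq : q ≠ 0) : sp q 0 = 0 := by simp [sp, Real.zero_rpow hq]

lemma abs_sp (q x : ℝ) : |sp q x| = |x| ^ q := by
  rcases le_or_gt 0 x with h | h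
  · rw [sp_of_nonneg q h, abs_of_nonneg h, abs_of_nonneg (Real.rpow_nonneg h q)]
  · rw [sp_of_neg q h, abs_neg, abs_of_nonneg (Real.rpow_nonneg (by linarith) q),
      abs_of_neg h]

lemma sp_neg (q x : ℝ) (hq : q ≠ 0) : sp q (-x) = -sp q x := by
  rcases lt_trichotomy x 0 with h | h | h
  · rw [sp_of_neg q h, sp_of_nonneg q (by linarith : (0:ℝ) ≤ -x), neg_neg]
  · simp [h, sp_zero hq]
  · rw [sp_of_nonneg q h.le, sp_of_neg q (by linarith : -x < 0), neg_neg]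

lemma sp_eq {q : ℝ} (hq : 0 < q) (x : ℝ) : sp q x = |x| ^ (q - 1) * x := by
  rcases lt_trichotomy x 0 with h | h | h
  · rw [sp_of_neg q h, abs_of_neg h]
    have : (-x) ^ (q - 1) * -x = (-x) ^ q := by
      rw [← Real.rpow_add_one (by linarith : -x ≠ 0)]
      norm_num
    nlinarith [this]
  · simp [h, sp_zero hq.ne']
  · rw [sp_of_nonneg q h.le, abs_of_pos h, ← Real.rpow_add_one h.ne']
    norm_num

lemma continuous_abs_rpow {q : ℝ} (hq : 0 < q) : Continuous fun x : ℝ => |x| ^ q := by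
  rw [continuous_iff_continuousAt]
  intro x
  exact (Real.continuousAt_rpow_const _ _ (Or.inr hq.le)).comp continuous_abs.continuousAt

lemma continuous_sp {q : ℝ} (hq : 0 < q) : Continuous (sp q) := by
  have : Continuous fun x : ℝ => |x| ^ q := continuous_abs_rpow hq
  rw [continuous_iff_continuousAt]
  intro x
  rcases lt_trichotomy x 0 with h | h | h
  · have : ContinuousAt (fun y : ℝ => -((-y) ^ q)) x :=
      (((Real.continuousAt_rpow_const _ _ (Or.inr hq.le)).comp
        (continuous_neg.continuousAt (x := x)))).neg
    refine this.congr ?_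
    filter_upwards [Iio_mem_nhds h] with y hy
    exact (sp_of_neg q hy).symm
  · subst h
    unfold ContinuousAt
    rw [sp_zero hq.ne']
    apply squeeze_zero_norm (fun y => (abs_sp q y).le)
    have h2 := (continuous_abs_rpow hq).tendsto 0
    simpa [Real.zero_rpow hq.ne'] using h2
  · have : ContinuousAt (fun y : ℝ => y ^ q) x :=
      Real.continuousAt_rpow_const _ _ (Or.inr hq.le)
    refine this.congr ?_
    filter_upwards [Ioi_mem_nhds h] with y hy
    exact (sp_of_nonneg q (le_of_lt hy)).symm

lemma hasDerivAt_abs_rpow' {p : ℝ} (hp : 1 < p) (x : ℝ) :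
    HasDerivAt (fun x : ℝ => |x| ^ p) (p * sp (p - 1) x) x := by
  have h := hasDerivAt_abs_rpow x hp
  convert h using 1
  rw [sp_eq (by linarith : (0:ℝ) < p - 1)]
  have : p - 1 - 1 = p - 2 := by ring
  rw [this]; ring

lemma hasDerivAt_sp {p : ℝ} (hp : 2 < p) (x : ℝ) :
    HasDerivAt (sp p) (p * |x| ^ (p - 1)) x := by
  have h1 : HasDerivAt (fun y : ℝ => |y| ^ (p - 1) * y)
      ((p - 1) * |x| ^ (p - 1 - 2) * x * x + |x| ^ (p - 1) * 1) x :=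
    (hasDerivAt_abs_rpow x (by linarith : 1 < p - 1)).mul (hasDerivAt_id x)
  have heq : (fun y : ℝ => |y| ^ (p - 1) * y) = sp p := by
    funext y; rw [sp_eq (by linarith : (0:ℝ) < p) y]
  rw [heq] at h1
  convert h1 using 1
  rcases eq_or_ne x 0 with h | h
  · subst h
    simp [Real.zero_rpow (by linarith : p - 1 ≠ 0)]
  · have hx : (0:ℝ) < |x| := abs_pos.mpr h
    have h2 : |x| ^ (p - 1 - 2) * x * x = |x| ^ (p - 1) := by
      have : x * x = |x| ^ (2:ℝ) := by
        rw [show (2:ℝ) = ((2:ℕ):ℝ) by norm_num, Real.rpow_natCast]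
        rw [sq_abs]; ring
      rw [mul_assoc, this, ← Real.rpow_add hx]
      norm_num
    have h3 : (p - 1) * |x| ^ (p - 1 - 2) * x * x = (p - 1) * (|x| ^ (p - 1 - 2) * x * x) := by
      ring
    rw [h3, h2]; ring

lemma intervalIntegrable_abs_rpow {r : ℝ} (hr : -1 < r) (c d : ℝ) :
    IntervalIntegrable (fun x : ℝ => |x| ^ r) volume c d := by
  suffices h : ∀ e : ℝ, IntervalIntegrable (fun x : ℝ => |x| ^ r) volume 0 e by
    exact ((h c).symm.trans (h d))
  have hpos : ∀ e : ℝ, 0 ≤ e → IntervalIntegrable (fun x : ℝ => |x| ^ r) volume 0 e := by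
    intro e he
    have h1 : IntervalIntegrable (fun x : ℝ => x ^ r) volume 0 e :=
      intervalIntegrable_rpow' hr
    rw [intervalIntegrable_iff] at h1 ⊢
    refine h1.congr_fun ?_ measurableSet_uIoc
    intro x hx
    rw [uIoc_of_le he] at hx
    show x ^ r = |x| ^ r
    rw [abs_of_pos hx.1]
  intro e
  rcases le_total 0 e with he | he
  · exact hpos e he
  · rw [IntervalIntegrable.iff_comp_neg]
    simpa [abs_neg, neg_zero] using hpos (-e) (by linarith)

lemma integral_abs_rpow {q : ℝ} (hq : 0 < q) (c d : ℝ) :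
    ∫ x in c..d, |x| ^ (q - 1) = (sp q d - sp q c) / q := by
  have hint : ∀ a b : ℝ, IntervalIntegrable (fun x : ℝ => |x| ^ (q - 1)) volume a b :=
    fun a b => intervalIntegrable_abs_rpow (by linarith) a b
  have key : ∀ e : ℝ, ∫ x in (0:ℝ)..e, |x| ^ (q - 1) = sp q e / q := by
    have hpos : ∀ e : ℝ, 0 ≤ e → ∫ x in (0:ℝ)..e, |x| ^ (q - 1) = sp q e / q := by
      intro e he
      have h1 : ∫ x in (0:ℝ)..e, |x| ^ (q - 1) = ∫ x in (0:ℝ)..e, x ^ (q - 1) := by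
        apply intervalIntegral.integral_congr
        intro x hx
        rw [uIcc_of_le he] at hx
        show |x| ^ (q - 1) = x ^ (q - 1)
        rw [abs_of_nonneg hx.1]
      rw [h1, integral_rpow (Or.inl (by linarith))]
      rw [show q - 1 + 1 = q by ring, Real.zero_rpow hq.ne', sp_of_nonneg q he]
      ring
    intro e
    rcases le_total 0 e with he | he
    · exact hpos e he
    · have h2 : ∫ x in (0:ℝ)..e, |x| ^ (q - 1) = ∫ x in (0:ℝ)..e, |(-x)| ^ (q - 1) := by
        simp [abs_neg]
      rw [h2, intervalIntegral.integral_comp_neg (fun x => |x| ^ (q - 1)), neg_zero]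
      have h3 : ∫ x in (-e)..(0:ℝ), |x| ^ (q - 1) = -(∫ x in (0:ℝ)..(-e), |x| ^ (q - 1)) := by
        rw [intervalIntegral.integral_symm]
      rw [h3, hpos (-e) (by linarith), sp_neg q e hq.ne']
      ring
  rw [← intervalIntegral.integral_add_adjacent_intervals (hint c 0) (hint 0 d)]
  have h4 : ∫ x in c..(0:ℝ), |x| ^ (q - 1) = -(sp q c / q) := by
    rw [intervalIntegral.integral_symm, key c]
  rw [h4, key d]; ring

lemma integral_abs_rpow_shift {q : ℝ} (hq : 0 < q) (e c d : ℝ) :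
    ∫ x in c..d, |x - e| ^ (q - 1) = (sp q (d - e) - sp q (c - e)) / q := by
  have := intervalIntegral.integral_comp_sub_right (a := c) (b := d)
    (fun x => |x| ^ (q - 1)) e
  rw [this, integral_abs_rpow hq]

/-- FTC: `∫ x in c..d, sp P (x - e) = (|d-e|^(P+1) - |c-e|^(P+1))/(P+1)` for `P > 0`. -/
lemma integral_sp_shift {P : ℝ} (hP : 0 < P) (e c d : ℝ) :
    ∫ x in c..d, sp P (x - e) = (|d - e| ^ (P + 1) - |c - e| ^ (P + 1)) / (P + 1) := by
  have hderiv : ∀ x : ℝ, HasDerivAt (fun y : ℝ => |y - e| ^ (P + 1) / (P + 1)) (sp P (x - e)) x := by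
    intro x
    have h1 : HasDerivAt (fun y : ℝ => y - e) 1 x := (hasDerivAt_id x).sub_const e
    have h2 := (hasDerivAt_abs_rpow' (by linarith : 1 < P + 1) (x - e)).comp x h1
    have h3 := h2.div_const (P + 1)
    refine h3.congr_deriv ?_
    rw [show P + 1 - 1 = P by ring]
    field_simp
  have hint : IntervalIntegrable (fun x : ℝ => sp P (x - e)) volume c d :=
    ((continuous_sp hP).comp (continuous_sub_right e)).intervalIntegrable c d
  rw [intervalIntegral.integral_eq_sub_of_hasDerivAt (fun x _ => hderiv x) hint]
  ring

/-- FTC: `∫ y in c..d, |y - e|^P = (sp (P+1) (d-e) - sp (P+1) (c-e))/(P+1)` for `P > 1`. -/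
lemma integral_abs_rpow_shift_big {P : ℝ} (hP : 1 < P) (e c d : ℝ) :
    ∫ x in c..d, |x - e| ^ P = (sp (P + 1) (d - e) - sp (P + 1) (c - e)) / (P + 1) := by
  have hderiv : ∀ x : ℝ, HasDerivAt (fun y : ℝ => sp (P + 1) (y - e) / (P + 1)) (|x - e| ^ P) x := by
    intro x
    have h1 : HasDerivAt (fun y : ℝ => y - e) 1 x := (hasDerivAt_id x).sub_const e
    have h2 := (hasDerivAt_sp (by linarith : 2 < P + 1) (x - e)).comp x h1
    have h3 := h2.div_const (P + 1)
    refine h3.congr_deriv ?_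
    rw [show P + 1 - 1 = P by ring]
    field_simp
  have hint : IntervalIntegrable (fun x : ℝ => |x - e| ^ P) volume c d :=
    ((continuous_abs_rpow (by linarith : (0:ℝ) < P)).comp
      (continuous_sub_right e)).intervalIntegrable c d
  rw [intervalIntegral.integral_eq_sub_of_hasDerivAt (fun x _ => hderiv x) hint]
  ring

lemma phi_nonneg {a R : ℝ} (hR : 0 < R) (y : ℝ) : 0 ≤ phi a R y := by
  unfold phi
  have : 0 ≤ ∫ x in (-R)..R, if |x - y| ≤ a then (1:ℝ) else 0 := by
    apply intervalIntegral.integral_nonneg (by linarith)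
    intro x _
    split <;> norm_num
  linarith

lemma phi_swap {a R : ℝ} (ha : 0 ≤ a) (hR : 0 < R) (g : ℝ → ℝ)
    (hg_meas : Measurable g) (hg_int : ∀ c d : ℝ, IntervalIntegrable g volume c d) :
    ∫ z, phi a R z * g z = (1/2) * ∫ x in (-R)..R, (∫ z in (x - a)..(x + a), g z) := by
  set μ := volume.restrict (Ioc (-R) R) with hμ
  set f : ℝ × ℝ → ℝ := fun p => (if |p.1 - p.2| ≤ a then (1:ℝ) else 0) * g p.2 with hf
  have hiff : ∀ x z : ℝ, (|x - z| ≤ a) ↔ z ∈ Icc (x - a) (x + a) := by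
    intro x z
    rw [abs_le, mem_Icc]
    constructor <;> (intro ⟨h1, h2⟩; constructor <;> linarith)
  have hfz : ∀ x : ℝ, (fun z => f (x, z)) = (Icc (x - a) (x + a)).indicator g := by
    intro x
    funext z
    simp only [hf, indicator_apply]
    by_cases h : |x - z| ≤ a
    · rw [if_pos h, if_pos ((hiff x z).mp h), one_mul]
    · rw [if_neg h, if_neg (fun hc => h ((hiff x z).mpr hc)), zero_mul]
  have hmeas : AEStronglyMeasurable f (μ.prod volume) := by
    have hS : MeasurableSet {p : ℝ × ℝ | |p.1 - p.2| ≤ a} :=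
      measurableSet_le (measurable_fst.sub measurable_snd).abs measurable_const
    exact ((Measurable.ite hS measurable_const measurable_const).mul
      (hg_meas.comp measurable_snd)).aestronglyMeasurable
  have hslice : ∀ x : ℝ, Integrable (fun z => f (x, z)) volume := by
    intro x
    rw [hfz x]
    exact ((intervalIntegrable_iff_integrableOn_Icc_of_le (by linarith)).mp
      (hg_int (x - a) (x + a))).integrable_indicator measurableSet_Icc
  have hintf : Integrable f (μ.prod volume) := by
    rw [MeasureTheory.integrable_prod_iff hmeas]
    constructor
    · exact Eventually.of_forall hslice
    · -- x ↦ ∫ z, ‖f (x, z)‖ is continuous, integrable on finite restrict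
      have habs : ∀ c d : ℝ, IntervalIntegrable (fun z => |g z|) volume c d :=
        fun c d => (hg_int c d).abs
      set A : ℝ → ℝ := fun u => ∫ z in (0:ℝ)..u, |g z| with hA
      have hAcont : Continuous A := intervalIntegral.continuous_primitive habs 0
      have hval : ∀ x : ℝ, (∫ z, ‖f (x, z)‖) = A (x + a) - A (x - a) := by
        intro x
        have h1 : (fun z => ‖f (x, z)‖) = (Icc (x - a) (x + a)).indicator fun z => |g z| := by
          funext z
          have hz := congrFun (hfz x) z
          rw [show ‖f (x, z)‖ = |f (x, z)| from rfl, hz]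
          simp only [indicator_apply]
          by_cases h : z ∈ Icc (x - a) (x + a) <;> simp [h]
        rw [h1, MeasureTheory.integral_indicator measurableSet_Icc,
          MeasureTheory.integral_Icc_eq_integral_Ioc,
          ← intervalIntegral.integral_of_le (by linarith : x - a ≤ x + a)]
        have hadj := intervalIntegral.integral_add_adjacent_intervals
          (habs 0 (x - a)) (habs (x - a) (x + a))
        have e1 : A (x - a) = ∫ z in (0:ℝ)..(x - a), |g z| := rfl
        have e2 : A (x + a) = ∫ z in (0:ℝ)..(x + a), |g z| := rfl
        rw [e1, e2]
        linarith [hadj]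
      have : Integrable (fun x => A (x + a) - A (x - a)) μ := by
        apply Continuous.integrableOn_Ioc
        exact (hAcont.comp (continuous_add_right a)).sub
          (hAcont.comp (continuous_sub_right a))
      refine this.congr ?_
      exact Eventually.of_forall fun x => (hval x).symm
  have hswap := MeasureTheory.integral_integral_swap
    (f := fun x z => f (x, z)) (μ := μ) (ν := volume) hintf
  -- LHS of hswap equals RHS of goal (×2), RHS of hswap equals ∫ z, 2 phi g
  have hL : (∫ x, ∫ z, f (x, z) ∂volume ∂μ)
      = ∫ x in (-R)..R, (∫ z in (x - a)..(x + a), g z) := by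
    rw [intervalIntegral.integral_of_le (by linarith : -R ≤ R)]
    apply MeasureTheory.setIntegral_congr_fun measurableSet_Ioc
    intro x _
    show (∫ z, f (x, z)) = ∫ z in (x - a)..(x + a), g z
    rw [hfz x, MeasureTheory.integral_indicator measurableSet_Icc,
      MeasureTheory.integral_Icc_eq_integral_Ioc,
      ← intervalIntegral.integral_of_le (by linarith : x - a ≤ x + a)]
  have hR2 : (∫ z, ∫ x, f (x, z) ∂μ ∂volume) = ∫ z, (2 * phi a R z) * g z := by
    apply MeasureTheory.integral_congr_ae
    apply Eventually.of_forall
    intro z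
    show (∫ x, f (x, z) ∂μ) = 2 * phi a R z * g z
    have h2 : (∫ x, f (x, z) ∂μ) = (∫ x, (if |x - z| ≤ a then (1:ℝ) else 0) ∂μ) * g z := by
      rw [← MeasureTheory.integral_mul_const]
    rw [h2]
    congr 1
    have : (∫ x, (if |x - z| ≤ a then (1:ℝ) else 0) ∂μ)
        = ∫ x in (-R)..R, (if |x - z| ≤ a then (1:ℝ) else 0) := by
      rw [intervalIntegral.integral_of_le (by linarith : -R ≤ R)]
    rw [this]
    unfold phi
    ring
  rw [hL] at hswap
  rw [hR2] at hswap
  rw [hswap, ← MeasureTheory.integral_const_mul]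
  apply MeasureTheory.integral_congr_ae
  apply Eventually.of_forall
  intro z
  show phi a R z * g z = 1 / 2 * (2 * phi a R z * g z)
  ring

section Main
variable {H : ℝ}

lemma inner_value (h1 : 1/2 < H) (h2 : H < 1) {a R : ℝ} (ha : 0 ≤ a) (hR : 0 < R) :
    H * (2 * H - 1) * ∫ y : ℝ, ∫ z : ℝ, phi a R y * phi a R z * |y - z| ^ (2 * H - 2)
      = ((2*R + 2*a) ^ (2*H+2) + |2*R - 2*a| ^ (2*H+2) - 2*(2*R) ^ (2*H+2)
          - 2*(2*a) ^ (2*H+2)) / (4 * ((2*H+1) * (2*H+2))) := by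
  have hq1 : (0:ℝ) < 2*H - 1 := by linarith
  have h2H : (1:ℝ) < 2*H := by linarith
  have hq3 : (0:ℝ) < 2*H + 1 := by linarith
  -- kernel measurability and integrability
  have hK_meas : ∀ y : ℝ, Measurable fun z : ℝ => |y - z| ^ (2*H - 2) := fun y =>
    ((measurable_const.sub measurable_id).abs).pow measurable_const
  have hK_int : ∀ y c d : ℝ, IntervalIntegrable (fun z : ℝ => |y - z| ^ (2*H - 2)) volume c d := by
    intro y c d
    have h := (intervalIntegrable_abs_rpow (by linarith : (-1:ℝ) < 2*H - 2)
      (c - y) (d - y)).comp_sub_right y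
    have heq : (fun z : ℝ => |z - y| ^ (2*H - 2)) = fun z : ℝ => |y - z| ^ (2*H - 2) := by
      funext z; rw [abs_sub_comm]
    simpa [heq] using h
  -- inner kernel integral
  have hKval : ∀ y x : ℝ, (∫ z in (x - a)..(x + a), |y - z| ^ (2*H - 2))
      = (sp (2*H-1) (x + a - y) - sp (2*H-1) (x - a - y)) / (2*H-1) := by
    intro y x
    have hcong : EqOn (fun z : ℝ => |y - z| ^ (2*H - 2))
        (fun z : ℝ => |z - y| ^ ((2*H - 1) - 1)) (uIcc (x - a) (x + a)) := by
      intro z _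
      show |y - z| ^ (2*H - 2) = |z - y| ^ ((2*H - 1) - 1)
      rw [abs_sub_comm, show (2*H - 1) - 1 = 2*H - 2 by ring]
    rw [intervalIntegral.integral_congr hcong, integral_abs_rpow_shift hq1 y (x - a) (x + a)]
  have hspint : ∀ q : ℝ, 0 < q → ∀ e c d : ℝ,
      IntervalIntegrable (fun x : ℝ => sp q (x - e)) volume c d := fun q hq e c d =>
    ((continuous_sp hq).comp (continuous_sub_right e)).intervalIntegrable c d
  -- F1
  set F1 : ℝ → ℝ := fun y => (1/4) * (|y - (R + a)| ^ (2*H) - |y - (a - R)| ^ (2*H)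
      - |y - (R - a)| ^ (2*H) + |y - (-R - a)| ^ (2*H)) with hF1
  have habs_cont : ∀ c : ℝ, Continuous fun y : ℝ => |y - c| ^ (2*H) := fun c =>
    (continuous_abs_rpow (by linarith : (0:ℝ) < 2*H)).comp (continuous_sub_right c)
  have hF1cont : Continuous F1 := by
    rw [hF1]
    exact continuous_const.mul ((((habs_cont (R+a)).sub (habs_cont (a-R))).sub
      (habs_cont (R-a))).add (habs_cont (-R-a)))
  -- Claim A
  have claimA : ∀ y : ℝ, H * (2*H - 1) * ∫ z, phi a R z * |y - z| ^ (2*H - 2) = F1 y := by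
    intro y
    rw [phi_swap ha hR _ (hK_meas y) (hK_int y)]
    rw [intervalIntegral.integral_congr (g := fun x : ℝ =>
      (sp (2*H-1) (x + a - y) - sp (2*H-1) (x - a - y)) / (2*H-1))
      (fun x _ => hKval y x)]
    have hre : (fun x : ℝ => (sp (2*H-1) (x + a - y) - sp (2*H-1) (x - a - y)) / (2*H-1))
        = fun x : ℝ => (2*H-1)⁻¹ * (sp (2*H-1) (x - (y - a)) - sp (2*H-1) (x - (y + a))) := by
      funext x
      rw [show x + a - y = x - (y - a) by ring, show x - a - y = x - (y + a) by ring]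
      ring
    rw [hre, intervalIntegral.integral_const_mul,
      intervalIntegral.integral_sub (hspint _ hq1 (y-a) (-R) R) (hspint _ hq1 (y+a) (-R) R),
      integral_sp_shift hq1 (y - a) (-R) R, integral_sp_shift hq1 (y + a) (-R) R]
    rw [show (2*H - 1 + 1 : ℝ) = 2*H by ring]
    have A1 : |R - (y - a)| = |y - (R + a)| := by rw [abs_sub_comm]; congr 1; ring
    have A2 : |(-R) - (y - a)| = |y - (a - R)| := by rw [abs_sub_comm]; congr 1; ring
    have A3 : |R - (y + a)| = |y - (R - a)| := by rw [abs_sub_comm]; congr 1; ring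
    have A4 : |(-R) - (y + a)| = |y - (-R - a)| := by rw [abs_sub_comm]; congr 1; ring
    rw [A1, A2, A3, A4, hF1]
    have : (2*H - 1) ≠ 0 := hq1.ne'
    field_simp
    ring_nf
    have h' : (-1 + H*2) ≠ 0 := by intro h; linarith
    field_simp
    ring
  -- reassociate the double integral
  have step1 : (∫ y : ℝ, ∫ z : ℝ, phi a R y * phi a R z * |y - z| ^ (2*H - 2))
      = ∫ y : ℝ, phi a R y * ∫ z : ℝ, phi a R z * |y - z| ^ (2*H - 2) := by
    apply MeasureTheory.integral_congr_ae
    apply Eventually.of_forall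
    intro y
    show (∫ z : ℝ, phi a R y * phi a R z * |y - z| ^ (2*H - 2)) = _
    rw [show (fun z : ℝ => phi a R y * phi a R z * |y - z| ^ (2*H - 2))
      = fun z : ℝ => phi a R y * (phi a R z * |y - z| ^ (2*H - 2)) by funext z; ring]
    exact MeasureTheory.integral_const_mul _ _
  have step2 : H * (2*H - 1) * (∫ y : ℝ, phi a R y * ∫ z : ℝ,
      phi a R z * |y - z| ^ (2*H - 2)) = ∫ y : ℝ, phi a R y * F1 y := by
    rw [← MeasureTheory.integral_const_mul]
    apply MeasureTheory.integral_congr_ae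
    apply Eventually.of_forall
    intro y
    show H * (2*H - 1) * (phi a R y * ∫ z : ℝ, phi a R z * |y - z| ^ (2*H - 2))
      = phi a R y * F1 y
    rw [← claimA y]
    ring
  rw [show 2 * H - 2 = 2*H - 2 by ring] at *
  rw [step1, step2]
  rw [phi_swap ha hR F1 hF1cont.measurable (fun c d => hF1cont.intervalIntegrable c d)]
  -- integrate F1 over [x-a, x+a]
  set q3 : ℝ := 2*H + 1 with hq3def
  set F2 : ℝ → ℝ := fun x => (1/(4*q3)) * ((sp q3 (x - R) - sp q3 (x - (R + 2*a)))
      - (sp q3 (x - (-R)) - sp q3 (x - (2*a - R)))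
      - (sp q3 (x - (R - 2*a)) - sp q3 (x - R))
      + (sp q3 (x - (-R - 2*a)) - sp q3 (x - (-R)))) with hF2
  have step4 : ∀ x : ℝ, (∫ y in (x - a)..(x + a), F1 y) = F2 x := by
    intro x
    have hII : ∀ c : ℝ, IntervalIntegrable (fun y : ℝ => |y - c| ^ (2*H)) volume (x-a) (x+a) :=
      fun c => (habs_cont c).intervalIntegrable _ _
    rw [hF1]
    rw [intervalIntegral.integral_const_mul]
    rw [intervalIntegral.integral_add (((hII (R+a)).sub (hII (a-R))).sub (hII (R-a))) (hII (-R-a))]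
    rw [intervalIntegral.integral_sub ((hII (R+a)).sub (hII (a-R))) (hII (R-a))]
    rw [intervalIntegral.integral_sub (hII (R+a)) (hII (a-R))]
    rw [integral_abs_rpow_shift_big h2H (R+a) (x-a) (x+a),
      integral_abs_rpow_shift_big h2H (a-R) (x-a) (x+a),
      integral_abs_rpow_shift_big h2H (R-a) (x-a) (x+a),
      integral_abs_rpow_shift_big h2H (-R-a) (x-a) (x+a)]
    rw [show x + a - (R + a) = x - R by ring, show x - a - (R + a) = x - (R + 2*a) by ring,
      show x + a - (a - R) = x - (-R) by ring, show x - a - (a - R) = x - (2*a - R) by ring,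
      show x + a - (R - a) = x - (R - 2*a) by ring,
      show x + a - (-R - a) = x - (-R - 2*a) by ring, show x - a - (-R - a) = x - (-R) by ring]
    rw [show x - a - (R - a) = x - R by ring]
    rw [hF2]
    have : (0:ℝ) < q3 := hq3
    field_simp
    try ring
  rw [intervalIntegral.integral_congr (g := F2) (fun x _ => step4 x)]
  -- final integration of F2 over [-R, R]
  have hspint3 : ∀ e : ℝ, IntervalIntegrable (fun x : ℝ => sp q3 (x - e)) volume (-R) R :=
    fun e => hspint q3 hq3 e (-R) R
  rw [hF2]
  rw [intervalIntegral.integral_const_mul]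
  rw [intervalIntegral.integral_add
    ((((hspint3 R).sub (hspint3 (R+2*a))).sub ((hspint3 (-R)).sub (hspint3 (2*a-R)))).sub
      ((hspint3 (R-2*a)).sub (hspint3 R)))
    ((hspint3 (-R-2*a)).sub (hspint3 (-R)))]
  rw [intervalIntegral.integral_sub
    (((hspint3 R).sub (hspint3 (R+2*a))).sub ((hspint3 (-R)).sub (hspint3 (2*a-R))))
    ((hspint3 (R-2*a)).sub (hspint3 R))]
  rw [intervalIntegral.integral_sub
    ((hspint3 R).sub (hspint3 (R+2*a))) ((hspint3 (-R)).sub (hspint3 (2*a-R)))]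
  rw [intervalIntegral.integral_sub (hspint3 R) (hspint3 (R+2*a))]
  rw [intervalIntegral.integral_sub (hspint3 (-R)) (hspint3 (2*a-R))]
  rw [intervalIntegral.integral_sub (hspint3 (R-2*a)) (hspint3 R)]
  rw [intervalIntegral.integral_sub (hspint3 (-R-2*a)) (hspint3 (-R))]
  rw [integral_sp_shift hq3 R (-R) R, integral_sp_shift hq3 (R+2*a) (-R) R,
    integral_sp_shift hq3 (-R) (-R) R, integral_sp_shift hq3 (2*a-R) (-R) R,
    integral_sp_shift hq3 (R-2*a) (-R) R, integral_sp_shift hq3 (-R-2*a) (-R) R]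
  rw [show q3 + 1 = 2*H + 2 by rw [hq3def]; ring]
  -- resolve absolute values
  have e1 : |R - R| = 0 := by rw [sub_self, abs_zero]
  have e2 : |(-R) - R| = 2*R := by rw [show (-R) - R = -(2*R) by ring, abs_neg,
    abs_of_nonneg (by linarith)]
  have e3 : |R - (R + 2*a)| = 2*a := by rw [show R - (R + 2*a) = -(2*a) by ring, abs_neg,
    abs_of_nonneg (by linarith)]
  have e4 : |(-R) - (R + 2*a)| = 2*R + 2*a := by rw [show (-R) - (R + 2*a) = -(2*R + 2*a) by ring,
    abs_neg, abs_of_nonneg (by linarith)]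
  have e5 : |R - (-R)| = 2*R := by rw [show R - (-R) = 2*R by ring, abs_of_nonneg (by linarith)]
  have e6 : |(-R) - (-R)| = 0 := by rw [sub_self, abs_zero]
  have e7 : |R - (2*a - R)| = |2*R - 2*a| := by congr 1; ring
  have e8 : |(-R) - (2*a - R)| = 2*a := by rw [show (-R) - (2*a - R) = -(2*a) by ring, abs_neg,
    abs_of_nonneg (by linarith)]
  have e9 : |R - (R - 2*a)| = 2*a := by rw [show R - (R - 2*a) = 2*a by ring,
    abs_of_nonneg (by linarith)]
  have e10 : |(-R) - (R - 2*a)| = |2*R - 2*a| := by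
    rw [show (-R) - (R - 2*a) = -(2*R - 2*a) by ring, abs_neg]
  have e11 : |R - (-R - 2*a)| = 2*R + 2*a := by rw [show R - (-R - 2*a) = 2*R + 2*a by ring,
    abs_of_nonneg (by linarith)]
  have e12 : |(-R) - (-R - 2*a)| = 2*a := by rw [show (-R) - (-R - 2*a) = 2*a by ring,
    abs_of_nonneg (by linarith)]
  rw [e1, e2, e3, e4, e5, e6, e7, e8, e9, e10, e11, e12]
  rw [Real.zero_rpow (by linarith : (2*H + 2 : ℝ) ≠ 0)]
  have hq4 : (0:ℝ) < 2*H + 2 := by linarith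
  field_simp
  ring

end Main

section SInt
variable {H t R : ℝ}

lemma sInt (h1 : 1/2 < H) (ht : 0 < t) (hR : t < R) :
    (∫ s in (0:ℝ)..t, ((2*R + 2*(t-s)) ^ (2*H+2) + (2*R - 2*(t-s)) ^ (2*H+2)
        - 2*(2*R) ^ (2*H+2) - 2*(2*(t-s)) ^ (2*H+2)) / (4*((2*H+1)*(2*H+2))))
      = (((2*R + 2*t) ^ (2*H+3) - (2*R - 2*t) ^ (2*H+3))/(2*(2*H+3))
          - 2*t*(2*R) ^ (2*H+2) - (2*t) ^ (2*H+3)/(2*H+3)) / (4*((2*H+1)*(2*H+2))) := by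
  have hq5 : (1:ℝ) ≤ 2*H + 3 := by linarith
  have hq5' : (0:ℝ) < 2*H + 3 := by linarith
  have hq4 : (0:ℝ) ≤ 2*H + 2 := by linarith
  have hD : (0:ℝ) < 4*((2*H+1)*(2*H+2)) := by nlinarith
  set q4 : ℝ := 2*H + 2 with hq4def
  set q5 : ℝ := 2*H + 3 with hq5def
  set D : ℝ := 4*((2*H+1)*(2*H+2)) with hDdef
  set A : ℝ → ℝ := fun s => (-(2*R + 2*(t-s)) ^ q5/(2*q5) + (2*R - 2*(t-s)) ^ q5/(2*q5)
      - 2*(2*R) ^ q4*s + (2*(t-s)) ^ q5/q5) / D with hA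
  have hderiv : ∀ s : ℝ, HasDerivAt A
      (((2*R + 2*(t-s)) ^ q4 + (2*R - 2*(t-s)) ^ q4 - 2*(2*R) ^ q4 - 2*(2*(t-s)) ^ q4) / D) s := by
    intro s
    have hin1 : HasDerivAt (fun s : ℝ => 2*R + 2*(t-s)) (-2) s := by
      have := (((hasDerivAt_id s).const_sub t).const_mul 2).const_add (2*R)
      refine this.congr_deriv ?_
      ring
    have hin2 : HasDerivAt (fun s : ℝ => 2*R - 2*(t-s)) 2 s := by
      have := (((hasDerivAt_id s).const_sub t).const_mul 2).const_sub (2*R)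
      refine this.congr_deriv ?_
      norm_num
    have hin3 : HasDerivAt (fun s : ℝ => 2*(t-s)) (-2) s := by
      have := ((hasDerivAt_id s).const_sub t).const_mul 2
      refine this.congr_deriv ?_
      ring
    have hp1 : HasDerivAt (fun s : ℝ => (2*R + 2*(t-s)) ^ q5)
        (q5 * (2*R + 2*(t-s)) ^ q4 * (-2)) s := by
      have := (Real.hasDerivAt_rpow_const (x := 2*R + 2*(t-s)) (p := q5)
        (Or.inr hq5)).comp s hin1
      refine this.congr_deriv ?_
      rw [show q5 - 1 = q4 by rw [hq5def, hq4def]; ring]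
    have hp2 : HasDerivAt (fun s : ℝ => (2*R - 2*(t-s)) ^ q5)
        (q5 * (2*R - 2*(t-s)) ^ q4 * 2) s := by
      have := (Real.hasDerivAt_rpow_const (x := 2*R - 2*(t-s)) (p := q5)
        (Or.inr hq5)).comp s hin2
      refine this.congr_deriv ?_
      rw [show q5 - 1 = q4 by rw [hq5def, hq4def]; ring]
    have hp3 : HasDerivAt (fun s : ℝ => (2*(t-s)) ^ q5)
        (q5 * (2*(t-s)) ^ q4 * (-2)) s := by
      have := (Real.hasDerivAt_rpow_const (x := 2*(t-s)) (p := q5)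
        (Or.inr hq5)).comp s hin3
      refine this.congr_deriv ?_
      rw [show q5 - 1 = q4 by rw [hq5def, hq4def]; ring]
    have hlin : HasDerivAt (fun s : ℝ => 2*(2*R) ^ q4*s) (2*(2*R) ^ q4) s := by
      simpa using (hasDerivAt_id s).const_mul (2*(2*R) ^ q4)
    have hsum := ((((hp1.neg.div_const (2*q5)).add (hp2.div_const (2*q5))).sub hlin).add
      (hp3.div_const q5)).div_const D
    refine hsum.congr_deriv ?_
    field_simp
    ring
  have hcont : Continuous fun s : ℝ => ((2*R + 2*(t-s)) ^ q4 + (2*R - 2*(t-s)) ^ q4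
      - 2*(2*R) ^ q4 - 2*(2*(t-s)) ^ q4) / D := by
    have hc : ∀ f : ℝ → ℝ, Continuous f → Continuous fun s : ℝ => (f s) ^ q4 := by
      intro f hf
      exact (Real.continuous_rpow_const hq4).comp hf
    refine Continuous.div_const ?_ D
    exact (((hc _ (by continuity)).add (hc _ (by continuity))).sub
      (continuous_const.mul continuous_const)).sub
      (continuous_const.mul (hc _ (by continuity)))
  rw [intervalIntegral.integral_eq_sub_of_hasDerivAt (fun s _ => hderiv s)
    (hcont.intervalIntegrable 0 t)]
  rw [hA]
  beta_reduce
  rw [show t - t = 0 by ring, show 2*R + 2*(0:ℝ) = 2*R by ring, show 2*R - 2*(0:ℝ) = 2*R by ring,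
    show (2:ℝ)*(0:ℝ) = 0 by ring, show t - 0 = t by ring]
  rw [Real.zero_rpow (by rw [hq5def]; intro h; linarith)]
  field_simp
  ring

end SInt

section Lhop

lemma hasDerivAt_one_add {q : ℝ} {u : ℝ} (hu : u ∈ Ioo (0:ℝ) 1) :
    HasDerivAt (fun v : ℝ => (1+v) ^ q) (q * (1+u) ^ (q-1)) u := by
  have h := (Real.hasDerivAt_rpow_const (x := 1 + u) (p := q)
    (Or.inl (by nlinarith [hu.1] : (1:ℝ) + u ≠ 0))).comp u ((hasDerivAt_id u).const_add 1)
  exact h.congr_deriv (by simp)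

lemma hasDerivAt_one_sub {q : ℝ} {u : ℝ} (hu : u ∈ Ioo (0:ℝ) 1) :
    HasDerivAt (fun v : ℝ => (1-v) ^ q) (-(q * (1-u) ^ (q-1))) u := by
  have h := (Real.hasDerivAt_rpow_const (x := 1 - u) (p := q)
    (Or.inl (by nlinarith [hu.2] : (1:ℝ) - u ≠ 0))).comp u ((hasDerivAt_id u).const_sub 1)
  refine h.congr_deriv ?_
  simp

lemma tendsto_onePow (q : ℝ) : Tendsto (fun u : ℝ => (1+u) ^ q) (𝓝[>] 0) (𝓝 1) := by
  have h : ContinuousAt (fun u : ℝ => (1+u) ^ q) 0 := by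
    have := (Real.continuousAt_rpow_const (1 + 0) q (Or.inl (by norm_num))).comp
      ((continuous_const.add continuous_id).continuousAt (x := (0:ℝ)))
    exact this
  have h2 := h.tendsto.mono_left (nhdsWithin_le_nhds (s := Set.Ioi (0:ℝ)))
  simpa using h2

lemma tendsto_oneSubPow (q : ℝ) : Tendsto (fun u : ℝ => (1-u) ^ q) (𝓝[>] 0) (𝓝 1) := by
  have h : ContinuousAt (fun u : ℝ => (1-u) ^ q) 0 := by
    have := (Real.continuousAt_rpow_const (1 - 0) q (Or.inl (by norm_num))).comp
      ((continuous_const.sub continuous_id).continuousAt (x := (0:ℝ)))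
    exact this
  have h2 := h.tendsto.mono_left (nhdsWithin_le_nhds (s := Set.Ioi (0:ℝ)))
  simpa using h2

lemma lhop3 (p : ℝ) : Tendsto (fun u : ℝ => ((1+u) ^ p - (1-u) ^ p - 2*p*u)/u^3)
    (𝓝[>] (0:ℝ)) (𝓝 (p*(p-1)*(p-2)/3)) := by
  have h01 : (0:ℝ) < 1 := one_pos
  -- Level 3
  have T3 : Tendsto (fun u : ℝ => (p*(p-1)*((p-2)*(1+u) ^ (p-3) + (p-2)*(1-u) ^ (p-3)))/6)
      (𝓝[>] (0:ℝ)) (𝓝 (p*(p-1)*(p-2)/3)) := by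
    have := (((tendsto_onePow (p-3)).const_mul (p-2)).add
      ((tendsto_oneSubPow (p-3)).const_mul (p-2))).const_mul (p*(p-1))
    have h2 := this.div_const 6
    convert h2 using 2
    ring
  -- Level 2→3
  have T2 : Tendsto (fun u : ℝ => (p*(p-1)*((1+u) ^ (p-2) - (1-u) ^ (p-2)))/(6*u))
      (𝓝[>] (0:ℝ)) (𝓝 (p*(p-1)*(p-2)/3)) := by
    apply HasDerivAt.lhopital_zero_right_on_Ioo h01
      (f' := fun u => p*(p-1)*((p-2)*(1+u) ^ (p-3) + (p-2)*(1-u) ^ (p-3)))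
      (g' := fun _ => 6)
    · intro u hu
      exact (((hasDerivAt_one_add (q := p-2) hu).sub (hasDerivAt_one_sub (q := p-2) hu)).const_mul
        (p*(p-1))).congr_deriv (by rw [show p - 2 - 1 = p - 3 by ring]; ring)
    · intro u hu
      simpa using ((hasDerivAt_id u).const_mul 6)
    · intro u hu; norm_num
    · have := ((tendsto_onePow (p-2)).sub (tendsto_oneSubPow (p-2))).const_mul (p*(p-1))
      simpa using this
    · have : Tendsto (fun u : ℝ => 6*u) (𝓝[>] (0:ℝ)) (𝓝 (6*0)) :=
        (continuous_const.mul continuous_id).continuousAt.tendsto.mono_left nhdsWithin_le_nhds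
      simpa using this
    · exact T3
  -- Level 1→2
  have T1 : Tendsto (fun u : ℝ => (p*(1+u) ^ (p-1) + p*(1-u) ^ (p-1) - 2*p)/(3*u^2))
      (𝓝[>] (0:ℝ)) (𝓝 (p*(p-1)*(p-2)/3)) := by
    apply HasDerivAt.lhopital_zero_right_on_Ioo h01
      (f' := fun u => p*(p-1)*((1+u) ^ (p-2) - (1-u) ^ (p-2)))
      (g' := fun u => 6*u)
    · intro u hu
      exact ((((hasDerivAt_one_add (q := p-1) hu).const_mul p).add
        ((hasDerivAt_one_sub (q := p-1) hu).const_mul p)).sub_const (2*p)).congr_deriv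
        (by rw [show p - 1 - 1 = p - 2 by ring]; ring)
    · intro u hu
      exact ((hasDerivAt_pow 2 u).const_mul 3).congr_deriv (by push_cast; ring)
    · intro u hu
      have := hu.1
      positivity
    · have := (((tendsto_onePow (p-1)).const_mul p).add
        ((tendsto_oneSubPow (p-1)).const_mul p)).sub_const (2*p)
      have h0 : p * 1 + p * 1 - 2*p = 0 := by ring
      rw [h0] at this
      exact this
    · have : Tendsto (fun u : ℝ => 3*u^2) (𝓝[>] (0:ℝ)) (𝓝 (3*0^2)) :=
        (continuous_const.mul (continuous_pow 2)).continuousAt.tendsto.mono_left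
          nhdsWithin_le_nhds
      simpa using this
    · exact T2
  -- Level 0→1
  apply HasDerivAt.lhopital_zero_right_on_Ioo h01
    (f' := fun u => p*(1+u) ^ (p-1) + p*(1-u) ^ (p-1) - 2*p)
    (g' := fun u => 3*u^2)
  · intro u hu
    exact (((hasDerivAt_one_add (q := p) hu).sub (hasDerivAt_one_sub (q := p) hu)).sub
      ((hasDerivAt_id u).const_mul (2*p))).congr_deriv (by ring)
  · intro u hu
    exact (hasDerivAt_pow 3 u).congr_deriv (by push_cast; ring)
  · intro u hu
    have := hu.1
    positivity
  · have := (((tendsto_onePow p).sub (tendsto_oneSubPow p)).sub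
      ((continuous_const.mul continuous_id).continuousAt.tendsto.mono_left
        (nhdsWithin_le_nhds (a := (0:ℝ))) : Tendsto (fun u : ℝ => 2*p*u) (𝓝[>] (0:ℝ)) (𝓝 (2*p*0))))
    have h0 : (1:ℝ) ^ p - (1:ℝ) ^ p - 2*p*0 = 0 := by ring
    simpa using this
  · have : Tendsto (fun u : ℝ => u^3) (𝓝[>] (0:ℝ)) (𝓝 ((0:ℝ)^3)) :=
      (continuous_pow 3).continuousAt.tendsto.mono_left nhdsWithin_le_nhds
    simpa using this
  · exact T1

end Lhop

section Limit
variable {H t : ℝ}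

lemma alg_eq (h1 : 1/2 < H) (ht : 0 < t) {R : ℝ} (hR : t < R) :
    R ^ (-(2*H)) * ((((2*R + 2*t) ^ (2*H+3) - (2*R - 2*t) ^ (2*H+3))/(2*(2*H+3))
        - 2*t*(2*R) ^ (2*H+2) - (2*t) ^ (2*H+3)/(2*H+3)) / (4*((2*H+1)*(2*H+2))))
      = (2 ^ (2*H+3) * t^3 / (8*((2*H+1)*((2*H+2)*(2*H+3)))))
          * (((1 + t/R) ^ (2*H+3) - (1 - t/R) ^ (2*H+3) - 2*(2*H+3)*(t/R))/(t/R)^3)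
        - ((2*t) ^ (2*H+3)/((2*H+3)*(4*((2*H+1)*(2*H+2))))) * R ^ (-(2*H)) := by
  have hR0 : (0:ℝ) < R := ht.trans hR
  have h2R : (0:ℝ) < 2*R := by linarith
  set u : ℝ := t/R with hudef
  have hu : 0 < u := div_pos ht hR0
  have hu1 : u < 1 := (div_lt_one hR0).mpr hR
  have hXpos : (0:ℝ) < (2*R) ^ (2*H+3) := Real.rpow_pos_of_pos h2R _
  have e1 : (2*R + 2*t) ^ (2*H+3) = (2*R) ^ (2*H+3) * (1 + u) ^ (2*H+3) := by
    rw [show 2*R + 2*t = (2*R)*(1+u) by rw [hudef]; field_simp,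
      Real.mul_rpow h2R.le (by linarith : (0:ℝ) ≤ 1 + u)]
  have e2 : (2*R - 2*t) ^ (2*H+3) = (2*R) ^ (2*H+3) * (1 - u) ^ (2*H+3) := by
    rw [show 2*R - 2*t = (2*R)*(1-u) by rw [hudef]; field_simp,
      Real.mul_rpow h2R.le (by linarith : (0:ℝ) ≤ 1 - u)]
  have e3 : 2*t*(2*R) ^ (2*H+2) = (2*R) ^ (2*H+3) * u := by
    have hp : (2*R) ^ (2*H+3) = (2*R) ^ (2*H+2) * (2*R) := by
      rw [show (2*H+3 : ℝ) = (2*H+2) + 1 by ring, Real.rpow_add_one h2R.ne']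
    rw [hp]
    have h2Ru : (2*R) * u = 2*t := by rw [hudef]; field_simp
    calc 2*t*(2*R) ^ (2*H+2) = (2*R) ^ (2*H+2) * ((2*R) * u) := by rw [h2Ru]; ring
    _ = (2*R) ^ (2*H+2) * (2*R) * u := by ring
  have e4 : R ^ (-(2*H)) = 2 ^ (2*H+3) * (t^3/u^3) / ((2*R) ^ (2*H+3)) := by
    rw [eq_div_iff hXpos.ne']
    have hx : (2*R) ^ (2*H+3) = 2 ^ (2*H+3) * R ^ (2*H+3) :=
      Real.mul_rpow (by norm_num) hR0.le
    rw [hx]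
    have hRR : R ^ (-(2*H)) * R ^ (2*H+3) = R ^ (3:ℝ) := by
      rw [← Real.rpow_add hR0]
      norm_num
    have hR3 : R ^ (3:ℝ) = t^3/u^3 := by
      rw [show (3:ℝ) = ((3:ℕ):ℝ) by norm_num, Real.rpow_natCast, hudef]
      field_simp
    calc R ^ (-(2*H)) * (2 ^ (2*H+3) * R ^ (2*H+3))
        = 2 ^ (2*H+3) * (R ^ (-(2*H)) * R ^ (2*H+3)) := by ring
    _ = 2 ^ (2*H+3) * (t^3/u^3) := by rw [hRR, hR3]
  rw [e1, e2, e3, e4]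
  have hq1 : (2*H+1) ≠ 0 := by intro h; linarith
  have hq2 : (2*H+2) ≠ 0 := by intro h; linarith
  have hq3 : (2*H+3) ≠ 0 := by intro h; linarith
  field_simp
  ring

end Limit

lemma tendsto_main (h1 : 1/2 < H) (ht : 0 < t) :
    Tendsto (fun R : ℝ => R ^ (-(2*H)) *
        ((((2*R + 2*t) ^ (2*H+3) - (2*R - 2*t) ^ (2*H+3))/(2*(2*H+3))
          - 2*t*(2*R) ^ (2*H+2) - (2*t) ^ (2*H+3)/(2*H+3)) / (4*((2*H+1)*(2*H+2)))))
      atTop (𝓝 ((4:ℝ) ^ H * t^3/3)) := by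
  set K : ℝ := 2 ^ (2*H+3) * t^3 / (8*((2*H+1)*((2*H+2)*(2*H+3)))) with hK
  set c : ℝ := (2*t) ^ (2*H+3)/((2*H+3)*(4*((2*H+1)*(2*H+2)))) with hc
  have hcomp : Tendsto (fun R : ℝ => t/R) atTop (𝓝[>] (0:ℝ)) := by
    rw [tendsto_nhdsWithin_iff]
    constructor
    · exact tendsto_const_nhds.div_atTop tendsto_id
    · filter_upwards [eventually_gt_atTop 0] with R hR
      exact div_pos ht hR
  have hL := (lhop3 (2*H+3)).comp hcomp
  have hKmul := hL.const_mul K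
  have hsmall := (tendsto_rpow_neg_atTop (by linarith : (0:ℝ) < 2*H)).const_mul c
  have hsub := hKmul.sub hsmall
  have hval : K * ((2*H+3)*((2*H+3)-1)*((2*H+3)-2)/3) - c * 0 = (4:ℝ) ^ H * t^3/3 := by
    have h4 : (4:ℝ) ^ H = 2 ^ (2*H) := by
      have h44 : (4:ℝ) = (2:ℝ) ^ ((2:ℕ):ℝ) := by
        rw [Real.rpow_natCast]; norm_num
      rw [h44, ← Real.rpow_mul (by norm_num : (0:ℝ) ≤ 2)]
      norm_num
    have h23 : (2:ℝ) ^ (2*H+3) = 2 ^ (2*H) * 8 := by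
      rw [Real.rpow_add (by norm_num : (0:ℝ) < 2)]
      congr 1
      rw [show (3:ℝ) = ((3:ℕ):ℝ) by norm_num, Real.rpow_natCast]
      norm_num
    rw [hK, hc, h23, h4]
    have hq1 : (2*H+1) ≠ 0 := by intro h; linarith
    have hq2 : (2*H+2) ≠ 0 := by intro h; linarith
    have hq3 : (2*H+3) ≠ 0 := by intro h; linarith
    field_simp
    ring
  rw [← hval]
  apply Tendsto.congr' _ hsub
  filter_upwards [eventually_gt_atTop t] with R hRt
  exact (alg_eq h1 ht hRt).symm

/-- For `H ∈ (1/2,1)` and `t > 0`: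
`lim_{R→∞} R^{-2H} ∫_0^t H(2H-1) ∬ φ_{t-s,R}(y) φ_{t-s,R}(z) |y-z|^{2H-2} dy dz ds
  = 4^H t³ / 3`. -/
theorem stmt_9 (H : ℝ) (hH : H ∈ Set.Ioo (1/2 : ℝ) 1) (t : ℝ) (ht : 0 < t) :
    Tendsto (fun R : ℝ =>
        R ^ (-(2 * H)) *
          ∫ s in (0:ℝ)..t, H * (2 * H - 1) *
            ∫ y : ℝ, ∫ z : ℝ, phi (t - s) R y * phi (t - s) R z * |y - z| ^ (2 * H - 2))
      atTop (𝓝 ((4 : ℝ) ^ H * t ^ 3 / 3)) := by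
  obtain ⟨h1, h2⟩ := hH
  have hmain := tendsto_main (t := t) h1 ht
  apply Tendsto.congr' _ hmain
  filter_upwards [eventually_gt_atTop t] with R hRt
  have hR0 : (0:ℝ) < R := ht.trans hRt
  have hstep : (∫ s in (0:ℝ)..t, H * (2 * H - 1) *
        ∫ y : ℝ, ∫ z : ℝ, phi (t - s) R y * phi (t - s) R z * |y - z| ^ (2 * H - 2))
      = ∫ s in (0:ℝ)..t, ((2*R + 2*(t-s)) ^ (2*H+2) + (2*R - 2*(t-s)) ^ (2*H+2)
          - 2*(2*R) ^ (2*H+2) - 2*(2*(t-s)) ^ (2*H+2)) / (4*((2*H+1)*(2*H+2))) := by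
    apply intervalIntegral.integral_congr
    intro s hs
    rw [uIcc_of_le ht.le] at hs
    have ha : (0:ℝ) ≤ t - s := by linarith [hs.2]
    show H * (2 * H - 1) *
        (∫ y : ℝ, ∫ z : ℝ, phi (t - s) R y * phi (t - s) R z * |y - z| ^ (2 * H - 2)) = _
    rw [inner_value h1 h2 ha hR0]
    rw [abs_of_nonneg (by linarith [hs.1] : (0:ℝ) ≤ 2*R - 2*(t-s))]
  show R ^ (-(2*H)) * _ = _
  rw [hstep, sInt h1 ht hRt]
end
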